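/- Let R be a ring with a countable approximate unit of idempotents {eₙ}, let I₂ ⊆ R be an ideal containing an ideal I₁, and suppose ē := e + I₁ satisfies (R/I₁)ē(R/I₁) = R/I₁ for an idempotent e ∈ R with ReR = R. Then for every idempotent p in the n×n matrix ring Mₙ(I₂/I₁), there exist k ∈ ℕ and an idempotent q ∈ M_k(ē(I₂/I₁)ē) such that p and q define the same class in K₀, witnessed by elements z, w with zw = diag(p,0,…,0) and (wz)² = q. -/

import Mathlib

/-- Every element of the additive subgroup generated by `{a * ē * b}` is a finite sum of such. -/
lemma closure_sum_rep {Q : Type*} [NonUnitalRing Q] (ebar v : Q)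
    (hv : v ∈ AddSubgroup.closure {y : Q | ∃ a b : Q, y = a * ebar * b}) :
    ∃ (m : ℕ) (A B : Fin m → Q), v = ∑ t, A t * ebar * B t := by
  refine AddSubgroup.closure_induction ?_ ?_ ?_ ?_ hv
  · rintro x ⟨a, b, rfl⟩
    exact ⟨1, fun _ => a, fun _ => b, by simp⟩
  · exact ⟨0, ![], ![], by simp⟩
  · rintro x y - - ⟨m₁, A₁, B₁, rfl⟩ ⟨m₂, A₂, B₂, rfl⟩
    refine ⟨m₁ + m₂, Fin.append A₁ A₂, Fin.append B₁ B₂, ?_⟩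
    rw [Fin.sum_univ_add]
    simp [Fin.append_left, Fin.append_right]
  · rintro x - ⟨m, A, B, rfl⟩
    exact ⟨m, fun t => -A t, B, by simp [Finset.sum_neg_distrib]⟩

lemma u_chain_le {R : Type*} [NonUnitalRing R] (u : ℕ → R)
    (huid : ∀ n, u n * u n = u n)
    (huchain : ∀ n, u (n + 1) * u n = u n ∧ u n * u (n + 1) = u n)
    {a b : ℕ} (h : a ≤ b) : u b * u a = u a ∧ u a * u b = u a := by
  induction b, h using Nat.le_induction with
  | base => exact ⟨huid a, huid a⟩
  | succ b hab ih =>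
    constructor
    · rw [show u (b+1) * u a = u (b+1) * (u b * u a) from by rw [ih.1],
        ← mul_assoc, (huchain b).1, ih.1]
    · rw [show u a * u (b+1) = (u a * u b) * u (b+1) from by rw [ih.2],
        mul_assoc, (huchain b).2, ih.2]



/-- The standard embedding of an `n × n` matrix as the upper-left corner of a `k × k` matrix
(`diag(p, 0, …, 0)`). -/
def cornerEmbed {Q : Type*} [Zero Q] {n k : ℕ} (p : Matrix (Fin n) (Fin n) Q) :
    Matrix (Fin k) (Fin k) Q :=
  fun i j => if h : (i : ℕ) < n ∧ (j : ℕ) < n then p ⟨i, h.1⟩ ⟨j, h.2⟩ else 0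

/-- Let `R` be a ring with a countable approximate unit of idempotents, `I₁ ⊆ I₂` two-sided
ideals and `e` an idempotent with `ReR = R`. Let `π : R → Q` realize the quotient `R/I₁` and
suppose `ē := π e` satisfies `(R/I₁)ē(R/I₁) = R/I₁`. Then every idempotent matrix `p` over
`I₂/I₁` is Murray–von Neumann equivalent to an idempotent matrix `q` over `ē(I₂/I₁)ē`,
witnessed by matrices `z, w` over `I₂/I₁` with `z*w = diag(p,0,…,0)` and `(w*z)² = q`. -/
theorem stmt16 {R Q : Type*} [NonUnitalRing R] [NonUnitalRing Q]
    (u : ℕ → R) (huid : ∀ n, u n * u n = u n)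
    (huchain : ∀ n, u (n + 1) * u n = u n ∧ u n * u (n + 1) = u n)
    (huabs : ∀ x : R, ∃ n, u n * x = x ∧ x * u n = x)
    (I₁ I₂ : TwoSidedIdeal R) (hle : I₁ ≤ I₂)
    (e : R) (he : e * e = e)
    (hfull : ∀ x : R, x ∈ AddSubgroup.closure
      {y : R | (∃ a, y = e * a) ∨ (∃ a, y = a * e) ∨ (∃ a b, y = a * e * b)})
    (π : R →ₙ+* Q) (hπ : Function.Surjective π) (hker : ∀ x : R, π x = 0 ↔ x ∈ I₁)
    (hebar : ∀ q : Q, q ∈ AddSubgroup.closure {y : Q | ∃ a b : Q, y = a * π e * b})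
    (n : ℕ) (p : Matrix (Fin n) (Fin n) Q)
    (hpmem : ∀ i j, p i j ∈ π '' (I₂ : Set R)) (hp : p * p = p) :
    ∃ (k : ℕ), n ≤ k ∧ ∃ q z w : Matrix (Fin k) (Fin k) Q,
      (∀ i j, q i j ∈ {y : Q | ∃ x ∈ π '' (I₂ : Set R), y = π e * x * π e}) ∧
      q * q = q ∧
      (∀ i j, z i j ∈ π '' (I₂ : Set R)) ∧
      (∀ i j, w i j ∈ π '' (I₂ : Set R)) ∧
      z * w = cornerEmbed p ∧
      (w * z) * (w * z) = q := by
  classical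
  -- lifts of the entries of p
  choose X hXI hXπ using hpmem
  -- a single element of the approximate unit absorbing all lifts
  set N : ℕ := Finset.univ.sup (fun ij : Fin n × Fin n => (huabs (X ij.1 ij.2)).choose) with hN
  have habsN : ∀ i j, u N * X i j = X i j := by
    intro i j
    have h1 := (huabs (X i j)).choose_spec
    have hle' : (huabs (X i j)).choose ≤ N :=
      Finset.le_sup (f := fun ij : Fin n × Fin n => (huabs (X ij.1 ij.2)).choose)
        (Finset.mem_univ (i, j))
    have h2 := u_chain_le u huid huchain hle'
    calc u N * X i j = u N * ((huabs (X i j)).choose |> u) * X i j := by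
          rw [mul_assoc, h1.1]
      _ = u (huabs (X i j)).choose * X i j := by rw [h2.1]
      _ = X i j := h1.1
  set ebar : Q := π e with hebardef
  have hee : ebar * ebar = ebar := by rw [hebardef, ← map_mul, he]
  set v : Q := π (u N) with hv
  have hvp : ∀ i j, v * p i j = p i j := by
    intro i j
    rw [← hXπ i j, hv, ← map_mul, habsN]
  -- finite sum representation of v
  obtain ⟨m, A, B, hvsum⟩ := closure_sum_rep ebar v (hebar v)
  choose Aℓ hAℓ using fun t => hπ (A t)
  choose Bℓ hBℓ using fun t => hπ (B t)
  -- the index type and its equivalence with Fin (n + m * n)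
  set ι := (Fin n ⊕ Fin m × Fin n)
  let ε : ι ≃ Fin (n + m * n) :=
    ((Equiv.refl (Fin n)).sumCongr finProdFinEquiv).trans finSumFinEquiv
  have hεl : ∀ i : Fin n, ((ε (Sum.inl i) : Fin (n + m * n)) : ℕ) = (i : ℕ) := by
    intro i
    show ((((Equiv.refl (Fin n)).sumCongr finProdFinEquiv).trans finSumFinEquiv)
      (Sum.inl i) : ℕ) = i
    simp
  have hεr : ∀ x : Fin m × Fin n, n ≤ ((ε (Sum.inr x) : Fin (n + m * n)) : ℕ) := by
    intro x
    show n ≤ ((((Equiv.refl (Fin n)).sumCongr finProdFinEquiv).trans finSumFinEquiv)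
      (Sum.inr x) : ℕ)
    simp
  -- the matrices over ι
  let Z : Matrix ι ι Q := fun i j =>
    match i, j with
    | Sum.inl i, Sum.inr (t, s) => p i s * A t * ebar
    | _, _ => 0
  let W : Matrix ι ι Q := fun i j =>
    match i, j with
    | Sum.inr (t, s), Sum.inl j => ebar * B t * p s j
    | _, _ => 0
  let P' : Matrix ι ι Q := fun i j =>
    match i, j with
    | Sum.inl i, Sum.inl j => p i j
    | _, _ => 0
  have hZW : Z * W = P' := by
    ext a b
    rw [Matrix.mul_apply]
    match a, b with
    | Sum.inl i, Sum.inl j =>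
      rw [Fintype.sum_sum_type]
      simp only [Z, W, P', mul_zero, zero_mul, Finset.sum_const_zero, zero_add]
      rw [Fintype.sum_prod_type, Finset.sum_comm]
      have : ∀ s : Fin n, ∑ t : Fin m, (p i s * A t * ebar) * (ebar * B t * p s j)
          = p i s * p s j := by
        intro s
        have : ∀ t : Fin m, (p i s * A t * ebar) * (ebar * B t * p s j)
            = p i s * ((A t * ebar * B t) * p s j) := by
          intro t
          calc (p i s * A t * ebar) * (ebar * B t * p s j)
              = p i s * (A t * (ebar * ebar) * B t * p s j) := by
                simp only [mul_assoc]
            _ = p i s * ((A t * ebar * B t) * p s j) := by rw [hee, mul_assoc]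
        rw [Finset.sum_congr rfl fun t _ => this t, ← Finset.mul_sum, ← Finset.sum_mul,
          ← hvsum, hvp]
      rw [Finset.sum_congr rfl fun s _ => this s]
      have := congrFun (congrFun hp i) j
      rw [Matrix.mul_apply] at this
      exact this
    | Sum.inl i, Sum.inr y => simp [Z, W, P']
    | Sum.inr x, Sum.inl j => simp [Z, W, P']
    | Sum.inr x, Sum.inr y => simp [Z, W, P']
  have hWP : W * P' = W := by
    ext a b
    rw [Matrix.mul_apply]
    match a, b with
    | Sum.inr (t, s), Sum.inl j =>
      rw [Fintype.sum_sum_type]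
      simp only [W, P', mul_zero, Finset.sum_const_zero, add_zero]
      have : ∀ i : Fin n, (ebar * B t * p s i) * p i j = (ebar * B t) * (p s i * p i j) := by
        intro i; rw [mul_assoc]
      rw [Finset.sum_congr rfl fun i _ => this i, ← Finset.mul_sum]
      have hps := congrFun (congrFun hp s) j
      rw [Matrix.mul_apply] at hps
      rw [hps]
    | Sum.inl i, Sum.inl j => simp [W, P']
    | Sum.inl i, Sum.inr y => simp [W, P']
    | Sum.inr x, Sum.inr y => simp [W, P']
  have hWZidem : (W * Z) * (W * Z) = W * Z := by
    calc (W * Z) * (W * Z) = W * (Z * W) * Z := by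
          rw [Matrix.mul_assoc, Matrix.mul_assoc, Matrix.mul_assoc]
      _ = W * Z := by rw [hZW, hWP]
  -- memberships over ι
  have hZmem : ∀ a b : ι, Z a b ∈ π '' (I₂ : Set R) := by
    intro a b
    match a, b with
    | Sum.inl i, Sum.inr (t, s) =>
      refine ⟨X i s * Aℓ t * e, ?_, ?_⟩
      · exact I₂.mul_mem_right _ _ (I₂.mul_mem_right _ _ (hXI i s))
      · simp [Z, map_mul, hXπ, hAℓ, hebardef]
    | Sum.inl i, Sum.inl j => exact ⟨0, I₂.zero_mem, by simp [Z]⟩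
    | Sum.inr x, Sum.inl j => exact ⟨0, I₂.zero_mem, by simp [Z]⟩
    | Sum.inr x, Sum.inr y => exact ⟨0, I₂.zero_mem, by simp [Z]⟩
  have hWmem : ∀ a b : ι, W a b ∈ π '' (I₂ : Set R) := by
    intro a b
    match a, b with
    | Sum.inr (t, s), Sum.inl j =>
      refine ⟨e * Bℓ t * X s j, ?_, ?_⟩
      · exact I₂.mul_mem_left _ _ (hXI s j)
      · simp [W, map_mul, hXπ, hBℓ, hebardef]
    | Sum.inl i, Sum.inl j => exact ⟨0, I₂.zero_mem, by simp [W]⟩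
    | Sum.inl i, Sum.inr y => exact ⟨0, I₂.zero_mem, by simp [W]⟩
    | Sum.inr x, Sum.inr y => exact ⟨0, I₂.zero_mem, by simp [W]⟩
  have hqmem : ∀ a b : ι, (W * Z) a b ∈
      {y : Q | ∃ x ∈ π '' (I₂ : Set R), y = π e * x * π e} := by
    intro a b
    rw [Matrix.mul_apply]
    match a, b with
    | Sum.inr (t, s), Sum.inr (t', s') =>
      rw [Fintype.sum_sum_type]
      simp only [W, Z, mul_zero, zero_mul, Finset.sum_const_zero, add_zero]
      have key : ∑ i : Fin n, (ebar * B t * p s i) * (p i s' * A t' * ebar)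
          = π e * (B t * p s s' * A t') * π e := by
        have : ∀ i : Fin n, (ebar * B t * p s i) * (p i s' * A t' * ebar)
            = (ebar * B t) * ((p s i * p i s') * (A t' * ebar)) := by
          intro i; simp only [mul_assoc]
        rw [Finset.sum_congr rfl fun i _ => this i, ← Finset.mul_sum, ← Finset.sum_mul]
        have hps := congrFun (congrFun hp s) s'
        rw [Matrix.mul_apply] at hps
        rw [hps, hebardef]
        simp only [mul_assoc]
      rw [key]
      refine ⟨B t * p s s' * A t', ⟨Bℓ t * X s s' * Aℓ t', ?_, ?_⟩, rfl⟩
      · exact I₂.mul_mem_right _ _ (I₂.mul_mem_left _ _ (hXI s s'))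
      · simp [map_mul, hXπ, hAℓ, hBℓ]
    | Sum.inl i, Sum.inl j =>
      refine ⟨0, ⟨0, I₂.zero_mem, map_zero π⟩, ?_⟩
      simp [W]
    | Sum.inl i, Sum.inr y =>
      refine ⟨0, ⟨0, I₂.zero_mem, map_zero π⟩, ?_⟩
      simp [W]
    | Sum.inr x, Sum.inl j =>
      refine ⟨0, ⟨0, I₂.zero_mem, map_zero π⟩, ?_⟩
      simp [Z]
  -- transfer everything to Fin (n + m * n)
  refine ⟨n + m * n, Nat.le_add_right n _, (W * Z).submatrix ε.symm ε.symm,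
    Z.submatrix ε.symm ε.symm, W.submatrix ε.symm ε.symm, ?_, ?_, ?_, ?_, ?_, ?_⟩
  · intro i j; exact hqmem _ _
  · rw [Matrix.submatrix_mul_equiv, hWZidem]
  · intro i j; exact hZmem _ _
  · intro i j; exact hWmem _ _
  · rw [Matrix.submatrix_mul_equiv, hZW]
    ext i j
    rw [Matrix.submatrix_apply]
    rcases hi : ε.symm i with i' | x <;> rcases hj : ε.symm j with j' | y
    · have hii : (i : ℕ) = (i' : ℕ) := by
        rw [← Equiv.apply_symm_apply ε i, hi, hεl]
      have hjj : (j : ℕ) = (j' : ℕ) := by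
        rw [← Equiv.apply_symm_apply ε j, hj, hεl]
      have hcond : (i : ℕ) < n ∧ (j : ℕ) < n := ⟨hii ▸ i'.isLt, hjj ▸ j'.isLt⟩
      rw [cornerEmbed, dif_pos hcond]
      show p i' j' = p ⟨i, hcond.1⟩ ⟨j, hcond.2⟩
      congr 1 <;> exact Fin.ext (by simp [hii, hjj])
    · have hjj : n ≤ (j : ℕ) := by
        rw [← Equiv.apply_symm_apply ε j, hj]; exact hεr y
      rw [cornerEmbed, dif_neg (by omega)]
    · have hii : n ≤ (i : ℕ) := by
        rw [← Equiv.apply_symm_apply ε i, hi]; exact hεr x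
      rw [cornerEmbed, dif_neg (by omega)]
    · have hii : n ≤ (i : ℕ) := by
        rw [← Equiv.apply_symm_apply ε i, hi]; exact hεr x
      rw [cornerEmbed, dif_neg (by omega)]
  · rw [Matrix.submatrix_mul_equiv, Matrix.submatrix_mul_equiv, hWZidem]
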